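/- Fix a real number ε > 0. The double point set {(s,t) ∈ ℂ² : s ≠ t and (s − t)·t + ε·(conj(s) − conj(t)) = 0} equals the parametrized set {(−ε·e^{−2iα} + ρ·e^{iα}, −ε·e^{−2iα}) : ρ ∈ ℝ, ρ > 0, α ∈ ℝ}. -/

import Mathlib

open Complex

/-- Parametrization of the double point set of the perturbed cross cap:
`{(s,t) : s ≠ t, (s−t)t + ε(conj s − conj t) = 0}` equals
`{(−ε e^{−2iα} + ρ e^{iα}, −ε e^{−2iα}) : ρ > 0, α ∈ ℝ}`. -/
theorem stmt_12 (ε : ℝ) (hε : 0 < ε) :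
    {p : ℂ × ℂ | p.1 ≠ p.2 ∧
        (p.1 - p.2) * p.2 +
          (ε : ℂ) * ((starRingEnd ℂ) p.1 - (starRingEnd ℂ) p.2) = 0} =
      {p : ℂ × ℂ | ∃ ρ α : ℝ, 0 < ρ ∧
        p = (-(ε : ℂ) * Complex.exp (-(2 * α) * Complex.I) +
              (ρ : ℂ) * Complex.exp (α * Complex.I),
            -(ε : ℂ) * Complex.exp (-(2 * α) * Complex.I))} := by
  ext ⟨s, t⟩
  simp only [Set.mem_setOf_eq]
  constructor
  · rintro ⟨hne, heq⟩
    have hw : s - t ≠ 0 := sub_ne_zero.mpr hne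
    set ρ := ‖s - t‖ with hρdef
    set α := (s - t).arg with hαdef
    have hρ : (0:ℝ) < ρ := norm_pos_iff.mpr hw
    have hwe : (ρ : ℂ) * Complex.exp (α * I) = s - t :=
      Complex.norm_mul_exp_arg_mul_I (s - t)
    have hconj : (starRingEnd ℂ) (s - t) = (ρ : ℂ) * Complex.exp (-(α:ℂ) * I) := by
      rw [← hwe]
      simp [← Complex.exp_conj, map_mul, Complex.conj_ofReal]
    have hexp : Complex.exp ((α:ℂ) * I) ≠ 0 := Complex.exp_ne_zero _
    have hρ0 : (ρ : ℂ) ≠ 0 := by exact_mod_cast hρ.ne'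
    have hee : Complex.exp (-(2 * (α:ℂ)) * I) * Complex.exp ((α:ℂ) * I)
        = Complex.exp (-(α:ℂ) * I) := by
      rw [← Complex.exp_add]; congr 1; ring
    have ht : t = -(ε : ℂ) * Complex.exp (-(2 * (α:ℂ)) * I) := by
      have key : (s - t) * t = -(ε : ℂ) * (starRingEnd ℂ) (s - t) := by
        rw [map_sub]; linear_combination heq
      rw [hconj, ← hwe] at key
      have h2 : t * ((ρ:ℂ) * Complex.exp ((α:ℂ) * I))
          = (-(ε : ℂ) * Complex.exp (-(2 * (α:ℂ)) * I)) * ((ρ:ℂ) * Complex.exp ((α:ℂ) * I)) := by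
        linear_combination key + (ε:ℂ) * (ρ:ℂ) * hee
      exact mul_right_cancel₀ (mul_ne_zero hρ0 hexp) h2
    refine ⟨ρ, α, hρ, ?_⟩
    have hs : s = -(ε : ℂ) * Complex.exp (-(2 * (α:ℂ)) * I) + (ρ : ℂ) * Complex.exp ((α:ℂ) * I) := by
      rw [← ht]; linear_combination (-1 : ℂ) * hwe
    exact Prod.ext hs ht
  · rintro ⟨ρ, α, hρ, hp⟩
    rw [Prod.ext_iff] at hp
    obtain ⟨hs, ht⟩ := hp
    simp only at hs ht
    subst hs; subst ht
    have hexp : Complex.exp ((α:ℂ) * I) ≠ 0 := Complex.exp_ne_zero _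
    have hρ0 : (ρ : ℂ) ≠ 0 := by exact_mod_cast hρ.ne'
    constructor
    · intro h
      have : (ρ : ℂ) * Complex.exp ((α:ℂ) * I) = 0 := by linear_combination h
      exact (mul_ne_zero hρ0 hexp) this
    · have hconj : (starRingEnd ℂ) ((ρ:ℂ) * Complex.exp ((α:ℂ) * I))
          = (ρ : ℂ) * Complex.exp (-(α:ℂ) * I) := by
        simp [← Complex.exp_conj, map_mul, Complex.conj_ofReal]
      have hee : Complex.exp (-(2 * (α:ℂ)) * I) * Complex.exp ((α:ℂ) * I)
          = Complex.exp (-(α:ℂ) * I) := by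
        rw [← Complex.exp_add]; congr 1; ring
      have hsub : (starRingEnd ℂ) (-(ε : ℂ) * Complex.exp (-(2 * (α:ℂ)) * I) +
            (ρ : ℂ) * Complex.exp ((α:ℂ) * I))
          - (starRingEnd ℂ) (-(ε : ℂ) * Complex.exp (-(2 * (α:ℂ)) * I))
          = (ρ : ℂ) * Complex.exp (-(α:ℂ) * I) := by
        rw [← hconj, map_add]; ring
      rw [hsub]
      linear_combination -(ε:ℂ) * (ρ:ℂ) * hee
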